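/- Let $u \ge 3$, let $p_1, \dots, p_u$ be pairwise distinct primes and $n_1, \dots, n_u$ positive integers. Then $\sum_{i=1}^u \frac{p_i^{n_i+1}-p_i}{p_i-1} \le \frac{1}{2}\prod_{i=1}^u p_i^{n_i}$. -/
import Mathlib

/-- Ordered base case: for 2 ≤ a < b < c, 4((a-1)+(b-1)+(c-1)) ≤ abc. -/
lemma key3 (a b c : ℕ) (ha : 2 ≤ a) (hab : a < b) (hbc : b < c) :
    4 * ((a - 1) + (b - 1) + (c - 1)) ≤ a * b * c := by
  have hb : 3 ≤ b := by omega
  have hc : 4 ≤ c := by omega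
  have h : 4 * (a + b + c) ≤ a * b * c + 12 := by
    zify
    have h2 : (1:ℤ) * 2 ≤ ((b:ℤ) - 2) * ((c:ℤ) - 2) := by
      apply mul_le_mul (by linarith) (by linarith) (by norm_num) (by linarith)
    have hbc4 : (0:ℤ) ≤ (b:ℤ) * (c:ℤ) - 4 := by nlinarith [h2]
    have h1 : (0:ℤ) ≤ ((a:ℤ) - 2) * ((b:ℤ) * (c:ℤ) - 4) :=
      mul_nonneg (by linarith) hbc4
    nlinarith [h1, h2]
  omega

/-- Symmetric base case. -/
lemma key3' (a b c : ℕ) (ha : 2 ≤ a) (hb : 2 ≤ b) (hc : 2 ≤ c)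
    (hab : a ≠ b) (hac : a ≠ c) (hbc : b ≠ c) :
    4 * ((a - 1) + (b - 1) + (c - 1)) ≤ a * b * c := by
  rcases Nat.lt_or_ge a b with h1 | h1 <;> rcases Nat.lt_or_ge b c with h2 | h2 <;>
    rcases Nat.lt_or_ge a c with h3 | h3
  · exact key3 a b c ha h1 h2
  · omega
  · calc 4 * ((a - 1) + (b - 1) + (c - 1)) = 4 * ((a - 1) + (c - 1) + (b - 1)) := by ring
      _ ≤ a * c * b := key3 a c b ha h3 (by omega)
      _ = a * b * c := by ring
  · calc 4 * ((a - 1) + (b - 1) + (c - 1)) = 4 * ((c - 1) + (a - 1) + (b - 1)) := by ring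
      _ ≤ c * a * b := key3 c a b hc (by omega) (by omega)
      _ = a * b * c := by ring
  · calc 4 * ((a - 1) + (b - 1) + (c - 1)) = 4 * ((b - 1) + (a - 1) + (c - 1)) := by ring
      _ ≤ b * a * c := key3 b a c hb (by omega) (by omega)
      _ = a * b * c := by ring
  · calc 4 * ((a - 1) + (b - 1) + (c - 1)) = 4 * ((b - 1) + (c - 1) + (a - 1)) := by ring
      _ ≤ b * c * a := key3 b c a hb (by omega) (by omega)
      _ = a * b * c := by ring
  · omega
  · calc 4 * ((a - 1) + (b - 1) + (c - 1)) = 4 * ((c - 1) + (b - 1) + (a - 1)) := by ring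
      _ ≤ c * b * a := key3 c b a hc (by omega) (by omega)
      _ = a * b * c := by ring

/-- Key combinatorial lemma. -/
lemma key (s : Finset ℕ) : (∀ x ∈ s, 2 ≤ x) → 3 ≤ s.card →
    4 * ∑ x ∈ s, (x - 1) ≤ ∏ x ∈ s, x := by
  induction s using Finset.strongInductionOn with
  | _ s ih =>
    intro h2 h3
    rcases Nat.eq_or_lt_of_le h3 with h3 | h4
    · obtain ⟨a, b, c, hab, hac, hbc, rfl⟩ := Finset.card_eq_three.mp h3.symm
      rw [Finset.sum_insert (by simp [hab, hac]), Finset.sum_insert (by simp [hbc]),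
        Finset.prod_insert (by simp [hab, hac]), Finset.prod_insert (by simp [hbc]),
        Finset.sum_singleton, Finset.prod_singleton, ← mul_assoc, ← add_assoc]
      exact key3' a b c (h2 a (by simp)) (h2 b (by simp)) (h2 c (by simp)) hab hac hbc
    · obtain ⟨x, hx⟩ : s.Nonempty := Finset.card_pos.mp (by omega)
      have hsub : s.erase x ⊂ s := Finset.erase_ssubset hx
      have hcard : 3 ≤ (s.erase x).card := by
        rw [Finset.card_erase_of_mem hx]; omega
      have h2' : ∀ y ∈ s.erase x, 2 ≤ y := fun y hy => h2 y (Finset.mem_of_mem_erase hy)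
      have IH := ih _ hsub h2' hcard
      have hprod : 8 ≤ ∏ y ∈ s.erase x, y := by
        calc (8 : ℕ) = 2 ^ 3 := by norm_num
          _ ≤ 2 ^ (s.erase x).card := Nat.pow_le_pow_right (by norm_num) hcard
          _ ≤ ∏ y ∈ s.erase x, y := Finset.pow_card_le_prod _ _ _ h2'
      rw [← Finset.sum_erase_add s _ hx, ← Finset.prod_erase_mul s _ hx]
      have hx2 : 2 ≤ x := h2 x hx
      have : 4 * (x - 1) ≤ (x - 1) * ∏ y ∈ s.erase x, y := by
        calc 4 * (x - 1) = (x-1) * 4 := by ring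
          _ ≤ (x - 1) * ∏ y ∈ s.erase x, y := Nat.mul_le_mul_left _ (by omega)
      have hx1 : x - 1 + 1 = x := by omega
      calc 4 * (∑ y ∈ s.erase x, (y - 1) + (x - 1))
          = 4 * ∑ y ∈ s.erase x, (y - 1) + 4 * (x - 1) := by ring
        _ ≤ ∏ y ∈ s.erase x, y + (x - 1) * ∏ y ∈ s.erase x, y := Nat.add_le_add IH this
        _ = (∏ y ∈ s.erase x, y) * (x - 1 + 1) := by ring
        _ = (∏ y ∈ s.erase x, y) * x := by rw [hx1]

theorem stmt_1 (u : ℕ) (hu : 3 ≤ u) (p n : Fin u → ℕ)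
    (hp : ∀ i, (p i).Prime) (hinj : Function.Injective p)
    (hn : ∀ i, 0 < n i) :
    ∑ i, ((p i : ℚ) ^ (n i + 1) - p i) / ((p i : ℚ) - 1)
      ≤ (1 / 2 : ℚ) * ∏ i, (p i : ℚ) ^ (n i) := by
  set a : Fin u → ℕ := fun i => p i ^ n i with ha
  have hainj : Function.Injective a := by
    intro i j hij
    apply hinj
    have h1 : p i ∣ p j ^ n j := by
      rw [show p j ^ n j = a j from rfl, ← hij]
      exact dvd_pow_self _ (hn i).ne'
    have := (Nat.Prime.dvd_of_dvd_pow (hp i) h1)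
    exact ((Nat.prime_dvd_prime_iff_eq (hp i) (hp j)).mp this)
  have ha2 : ∀ i, 2 ≤ a i := fun i =>
    le_trans (hp i).two_le (Nat.le_self_pow (by have := hn i; omega) _)
  -- per-term bound
  have hterm : ∀ i, ((p i : ℚ) ^ (n i + 1) - p i) / ((p i : ℚ) - 1)
      ≤ 2 * ((a i : ℚ) - 1) := by
    intro i
    have hp2 : (2 : ℚ) ≤ (p i : ℚ) := by exact_mod_cast (hp i).two_le
    have hpos : (0 : ℚ) < (p i : ℚ) - 1 := by linarith
    rw [div_le_iff₀ hpos]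
    have hq : (1 : ℚ) ≤ (p i : ℚ) ^ n i := one_le_pow₀ (by linarith)
    have : (a i : ℚ) = (p i : ℚ) ^ n i := by push_cast [ha]; ring
    rw [this, pow_succ]
    nlinarith [mul_nonneg (by linarith : (0:ℚ) ≤ (p i : ℚ) - 2) (by linarith : (0:ℚ) ≤ (p i : ℚ) ^ n i - 1)]
  -- combinatorial bound
  have hset := key (Finset.image a Finset.univ)
    (by intro x hx; obtain ⟨i, _, rfl⟩ := Finset.mem_image.mp hx; exact ha2 i)
    (by rw [Finset.card_image_of_injective _ hainj, Finset.card_univ, Fintype.card_fin]; omega)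
  rw [Finset.sum_image (fun i _ j _ h => hainj h),
    Finset.prod_image (fun i _ j _ h => hainj h)] at hset
  have hsum : ∑ i, ((p i : ℚ) ^ (n i + 1) - p i) / ((p i : ℚ) - 1)
      ≤ ∑ i, 2 * ((a i : ℚ) - 1) := Finset.sum_le_sum fun i _ => hterm i
  have hcast : ∑ i, 2 * ((a i : ℚ) - 1) = 2 * ((∑ i, (a i - 1) : ℕ) : ℚ) := by
    rw [Nat.cast_sum, Finset.mul_sum]
    apply Finset.sum_congr rfl
    intro i _
    rw [Nat.cast_sub (by have := ha2 i; omega : 1 ≤ a i)]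
    push_cast
    ring
  have hprodcast : ∏ i, (p i : ℚ) ^ (n i) = ((∏ i, a i : ℕ) : ℚ) := by
    rw [Nat.cast_prod]
    exact Finset.prod_congr rfl fun i _ => by push_cast [ha]; ring
  have hfin : (4 : ℚ) * ((∑ i, (a i - 1) : ℕ) : ℚ) ≤ ((∏ i, a i : ℕ) : ℚ) := by
    exact_mod_cast hset
  rw [hprodcast]
  calc ∑ i, ((p i : ℚ) ^ (n i + 1) - p i) / ((p i : ℚ) - 1)
      ≤ 2 * ((∑ i, (a i - 1) : ℕ) : ℚ) := hcast ▸ hsum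
    _ ≤ (1/2 : ℚ) * ((∏ i, a i : ℕ) : ℚ) := by linarith
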